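/- arXiv:1906.02226 — 2 statements merged into one kernel-verified Lean document; each statement's English description precedes it below -/
import Mathlib

section
/- Let $U \in \mathbb{R}^{d \times d}$ and let $A_U \in \{0,1\}^{d \times d}$ be defined by $(A_U)_{ij} = 1$ if $U_{ij} \neq 0$ and $0$ otherwise. Then the directed graph with adjacency matrix $A_U$ is acyclic if and only if $\mathrm{Tr}\, e^{U \odot U} = d$, where $\odot$ denotes the Hadamard (entrywise) product. -/
/-- A directed graph on `Fin d`, given by an edge relation, is acyclic if it contains no
nonempty closed directed walk. -/
def DiGraphAcyclic {d : ℕ} (E : Fin d → Fin d → Prop) : Prop :=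
  ¬ ∃ (k : ℕ) (v : ℕ → Fin d), 1 ≤ k ∧ v k = v 0 ∧ ∀ i < k, E (v i) (v (i + 1))

attribute [local instance] Matrix.linftyOpNormedAddCommGroup Matrix.linftyOpNormedRing
  Matrix.linftyOpNormedAlgebra

open Matrix in
private lemma pow_entry_nonneg {d : ℕ} {M : Matrix (Fin d) (Fin d) ℝ}
    (hM : ∀ i j, 0 ≤ M i j) : ∀ (n : ℕ) (i j : Fin d), 0 ≤ (M ^ n) i j := by
  intro n
  induction n with
  | zero => intro i j; by_cases h : i = j <;> simp [pow_zero, Matrix.one_apply, h]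
  | succ n ih =>
    intro i j
    rw [pow_succ, Matrix.mul_apply]
    exact Finset.sum_nonneg fun l _ => mul_nonneg (ih i l) (hM l j)

open Matrix in
private lemma walk_pos {d : ℕ} {M : Matrix (Fin d) (Fin d) ℝ}
    (hM : ∀ i j, 0 ≤ M i j) :
    ∀ (n : ℕ) (v : ℕ → Fin d), (∀ t < n, M (v t) (v (t + 1)) ≠ 0) →
      0 < (M ^ n) (v 0) (v n) := by
  intro n
  induction n with
  | zero => intro v _; simp [pow_zero, Matrix.one_apply]
  | succ n ih =>
    intro v hv
    have h1 : 0 < (M ^ n) (v 0) (v n) := ih v fun t ht => hv t (by omega)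
    have h2 : 0 < M (v n) (v (n + 1)) :=
      lt_of_le_of_ne (hM _ _) (Ne.symm (hv n (by omega)))
    rw [pow_succ, Matrix.mul_apply]
    have : 0 < (M ^ n) (v 0) (v n) * M (v n) (v (n + 1)) := mul_pos h1 h2
    calc (0:ℝ) < (M ^ n) (v 0) (v n) * M (v n) (v (n + 1)) := this
      _ ≤ ∑ l, (M ^ n) (v 0) l * M l (v (n + 1)) :=
        Finset.single_le_sum (f := fun l => (M ^ n) (v 0) l * M l (v (n + 1)))
          (fun l _ => mul_nonneg (pow_entry_nonneg hM n _ _) (hM _ _)) (Finset.mem_univ _)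

open Matrix in
private lemma nonzero_walk {d : ℕ} {M : Matrix (Fin d) (Fin d) ℝ} :
    ∀ (n : ℕ) (i j : Fin d), (M ^ n) i j ≠ 0 →
      ∃ v : ℕ → Fin d, v 0 = i ∧ v n = j ∧ ∀ t < n, M (v t) (v (t + 1)) ≠ 0 := by
  intro n
  induction n with
  | zero =>
    intro i j h
    refine ⟨fun _ => i, rfl, ?_, by omega⟩
    by_contra hij
    rw [pow_zero, Matrix.one_apply_ne (by simpa using hij)] at h
    exact h rfl
  | succ n ih =>
    intro i j h
    rw [pow_succ', Matrix.mul_apply] at h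
    obtain ⟨l, -, hl⟩ := Finset.exists_ne_zero_of_sum_ne_zero h
    have hMil : M i l ≠ 0 := fun h0 => hl (by simp [h0])
    have hMlj : (M ^ n) l j ≠ 0 := fun h0 => hl (by simp [h0])
    obtain ⟨v, hv0, hvn, hve⟩ := ih l j hMlj
    refine ⟨fun t => if t = 0 then i else v (t - 1), by simp, by simp [hvn], ?_⟩
    intro t ht
    rcases Nat.eq_zero_or_pos t with rfl | htpos
    · simpa [hv0] using hMil
    · have h1 : ¬ (t = 0) := by omega
      have h2 : ¬ (t + 1 = 0) := by omega
      simp only [h1, h2, if_false]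
      have : t - 1 + 1 = t + 1 - 1 := by omega
      rw [show t + 1 - 1 = (t - 1) + 1 by omega]
      exact hve (t - 1) (by omega)

/-- The directed graph whose edges are the nonzero entries of `U` is acyclic iff
`Tr e^{U ⊙ U} = d`, where `⊙` is the Hadamard product. -/
theorem acyclic_iff_trace_exp_hadamard_eq_dim {d : ℕ} (U : Matrix (Fin d) (Fin d) ℝ) :
    DiGraphAcyclic (fun i j => U i j ≠ 0) ↔
      Matrix.trace (NormedSpace.exp (Matrix.hadamard U U)) = d := by
  set M := Matrix.hadamard U U with hMdef
  have hMnn : ∀ i j, 0 ≤ M i j := fun i j => by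
    simp [hMdef, Matrix.hadamard_apply, mul_self_nonneg]
  have hMne : ∀ i j, M i j ≠ 0 ↔ U i j ≠ 0 := fun i j => by
    simp [hMdef, Matrix.hadamard_apply, mul_self_eq_zero]
  -- trace as a sum of the exp series
  have hexp : HasSum (fun n : ℕ => ((n.factorial : ℝ)⁻¹) • M ^ n)
      (NormedSpace.exp M) := NormedSpace.exp_series_hasSum_exp' M
  have htrcont : Continuous (Matrix.trace : Matrix (Fin d) (Fin d) ℝ → ℝ) := by
    have heq : (Matrix.trace : Matrix (Fin d) (Fin d) ℝ → ℝ) = fun A => ∑ i, A i i := rfl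
    rw [heq]
    exact continuous_finset_sum _ fun i _ =>
      (continuous_apply i).comp (continuous_apply i)
  have htr : HasSum (fun n : ℕ => ((n.factorial : ℝ)⁻¹) * Matrix.trace (M ^ n))
      (Matrix.trace (NormedSpace.exp M)) := by
    have := hexp.map (Matrix.traceLinearMap (Fin d) ℝ ℝ) htrcont
    simpa [Function.comp_def, Matrix.trace_smul, smul_eq_mul] using this
  set f : ℕ → ℝ := fun n => ((n.factorial : ℝ)⁻¹) * Matrix.trace (M ^ n) with hf
  have hf0 : f 0 = d := by simp [hf, Matrix.trace_one]
  have hfnn : ∀ n, 0 ≤ f n := fun n =>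
    mul_nonneg (by positivity) (Finset.sum_nonneg fun i _ => pow_entry_nonneg hMnn n i i)
  constructor
  · -- acyclic → trace = d
    intro hac
    have hzero : ∀ n, n ≠ 0 → f n = 0 := by
      intro n hn
      have : Matrix.trace (M ^ n) = 0 := by
        apply Finset.sum_eq_zero
        intro i _
        by_contra hne
        obtain ⟨v, hv0, hvn, hve⟩ := nonzero_walk n i i hne
        exact hac ⟨n, v, by omega, by rw [hvn, hv0], fun t ht => (hMne _ _).mp (hve t ht)⟩
      simp [hf, this]
    have : HasSum f (f 0) := by
      have := hasSum_single (f := f) 0 (fun n hn => hzero n hn)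
      exact this
    rw [hf0] at this
    exact htr.unique this
  · -- trace = d → acyclic
    intro hsum
    rintro ⟨k, v, hk, hvk, hve⟩
    have hdiag : 0 < (M ^ k) (v 0) (v 0) := by
      have := walk_pos hMnn k v fun t ht => (hMne _ _).mpr (hve t ht)
      rwa [hvk] at this
    have hfk : 0 < f k := by
      apply mul_pos (by positivity)
      calc (0:ℝ) < (M ^ k) (v 0) (v 0) := hdiag
        _ ≤ Matrix.trace (M ^ k) :=
          Finset.single_le_sum (f := fun i => (M ^ k) i i)
            (fun i _ => pow_entry_nonneg hMnn k i i) (Finset.mem_univ _)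
    have hle : f 0 + f k ≤ ∑' n, f n := by
      have : ∑ n ∈ ({0, k} : Finset ℕ), f n ≤ ∑' n, f n :=
        Summable.sum_le_tsum _ (fun n _ => hfnn n) htr.summable
      rwa [Finset.sum_pair (by omega : (0:ℕ) ≠ k)] at this
    rw [htr.tsum_eq, hsum, hf0] at hle
    linarith
end

section
/- Let $g : \mathbb{R} \to \mathbb{R}$ be any function with $g(0)$ arbitrary, and define the neural network function $f : \mathbb{R}^d \to \mathbb{R}^m$ by $f(x) = W^{(L+1)} g(\cdots g(W^{(2)} g(W^{(1)} x)) \cdots)$ where $g$ is applied entrywise. Let $C = |W^{(L+1)}| \cdots |W^{(1)}|$ be the connectivity matrix. If $C_{ki} = 0$, then the $k$-th output $f_k(x)$ does not depend on the $i$-th input $x_i$, i.e. for all $x, x' \in \mathbb{R}^d$ agreeing on all coordinates except coordinate $i$, $f_k(x) = f_k(x')$. -/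
/-- The connectivity matrix `C = |W^{(n)}| ⋯ |W^{(1)}|` of a stack of `n` weight matrices
with layer sizes `h 0, h 1, …, h n`. -/
noncomputable def connectivity : ∀ {n : ℕ} (h : Fin (n + 1) → ℕ)
    (W : ∀ i : Fin n, Matrix (Fin (h i.succ)) (Fin (h i.castSucc)) ℝ),
    Matrix (Fin (h (Fin.last n))) (Fin (h 0)) ℝ
  | 0, h, _ => (1 : Matrix (Fin (h 0)) (Fin (h 0)) ℝ)
  | n + 1, h, W =>
      (Matrix.of fun i j => |W (Fin.last n) i j|) *
        connectivity (fun i => h i.castSucc) (fun i => W i.castSucc)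

/-- The hidden-layer computation `x ↦ g(W^{(n)} g( ⋯ g(W^{(1)} x) ⋯ ))` of a stack of `n`
weight matrices, applying the nonlinearity `g` entrywise after each matrix. -/
noncomputable def netHidden (g : ℝ → ℝ) : ∀ {n : ℕ} (h : Fin (n + 1) → ℕ)
    (W : ∀ i : Fin n, Matrix (Fin (h i.succ)) (Fin (h i.castSucc)) ℝ),
    (Fin (h 0) → ℝ) → (Fin (h (Fin.last n)) → ℝ)
  | 0, _, _, x => x
  | n + 1, h, W, x => fun j =>
      g ((W (Fin.last n)).mulVec
        (netHidden g (fun i => h i.castSucc) (fun i => W i.castSucc) x) j)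

lemma connectivity_nonneg : ∀ {n : ℕ} (h : Fin (n + 1) → ℕ)
    (W : ∀ i : Fin n, Matrix (Fin (h i.succ)) (Fin (h i.castSucc)) ℝ)
    (k : Fin (h (Fin.last n))) (i : Fin (h 0)), 0 ≤ connectivity h W k i
  | 0, h, W, k, i => by
      rw [connectivity, Matrix.one_apply]
      split <;> norm_num
  | n + 1, h, W, k, i => by
      rw [connectivity]; erw [Matrix.mul_apply]
      exact Finset.sum_nonneg fun j _ =>
        mul_nonneg (abs_nonneg _) (connectivity_nonneg _ _ _ _)

lemma netHidden_congr (g : ℝ → ℝ) : ∀ {n : ℕ} (h : Fin (n + 1) → ℕ)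
    (W : ∀ i : Fin n, Matrix (Fin (h i.succ)) (Fin (h i.castSucc)) ℝ)
    (k : Fin (h (Fin.last n))) (i : Fin (h 0))
    (_ : connectivity h W k i = 0)
    (x x' : Fin (h 0) → ℝ) (_ : ∀ l, l ≠ i → x l = x' l),
    netHidden g h W x k = netHidden g h W x' k
  | 0, h, W, k, i, hC, x, x', hx => by
      rw [connectivity, Matrix.one_apply] at hC
      exact hx k (by intro e; rw [if_pos e] at hC; norm_num at hC)
  | n + 1, h, W, k, i, hC, x, x', hx => by
      rw [connectivity] at hC; erw [Matrix.mul_apply] at hC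
      have hz := (Finset.sum_eq_zero_iff_of_nonneg (fun j _ =>
        mul_nonneg (abs_nonneg _) (connectivity_nonneg _ _ _ _))).mp hC
      show g _ = g _
      congr 1
      simp only [Matrix.mulVec, dotProduct]
      refine Finset.sum_congr rfl fun j _ => ?_
      rcases mul_eq_zero.mp (hz j (Finset.mem_univ j)) with h0 | h0
      · simp only [Matrix.of_apply] at h0
        rw [abs_eq_zero.mp h0]; ring
      · rw [netHidden_congr g (fun i => h i.castSucc) (fun i => W i.castSucc) j i h0 x x' hx]

/-- If the connectivity matrix entry `C k i` vanishes, then the `k`-th output of the neural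
network `f(x) = W^{(L+1)} g(⋯ g(W^{(1)} x) ⋯)` does not depend on input coordinate `i`. -/
theorem output_independent_of_input_of_connectivity_zero {L : ℕ}
    (h : Fin (L + 2) → ℕ)
    (W : ∀ i : Fin (L + 1), Matrix (Fin (h i.succ)) (Fin (h i.castSucc)) ℝ)
    (g : ℝ → ℝ) (k : Fin (h (Fin.last (L + 1)))) (i : Fin (h 0))
    (hC : connectivity h W k i = 0) :
    ∀ x x' : Fin (h 0) → ℝ, (∀ l, l ≠ i → x l = x' l) →
      (W (Fin.last L)).mulVec
          (netHidden g (fun l => h l.castSucc) (fun l => W l.castSucc) x) k =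
        (W (Fin.last L)).mulVec
          (netHidden g (fun l => h l.castSucc) (fun l => W l.castSucc) x') k := by
  intro x x' hx
  rw [connectivity] at hC; erw [Matrix.mul_apply] at hC
  have hz := (Finset.sum_eq_zero_iff_of_nonneg (fun j _ =>
    mul_nonneg (abs_nonneg _) (connectivity_nonneg _ _ _ _))).mp hC
  simp only [Matrix.mulVec, dotProduct]
  refine Finset.sum_congr rfl fun j _ => ?_
  rcases mul_eq_zero.mp (hz j (Finset.mem_univ j)) with h0 | h0
  · simp only [Matrix.of_apply] at h0
    rw [abs_eq_zero.mp h0]; ring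
  · rw [netHidden_congr g (fun l => h l.castSucc) (fun l => W l.castSucc) j i h0 x x' hx]
end
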